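/- Let G be a group, A a set, and τ : A^G → A^G a cellular automaton with memory set M ⊆ G. Let H be the subgroup generated by M and τ_H : A^H → A^H the restriction cellular automaton with the same local defining map. Then τ is surjective if and only if τ_H is surjective. -/

import Mathlib

theorem stmt_8 {G A : Type*} [Group G] (M : Set G) (hMfin : M.Finite)
    (μ : (M → A) → A) (τ : (G → A) → (G → A))
    (hτ : ∀ (c : G → A) (g : G), τ c g = μ (fun m : M => c (g * m)))
    (τH : (↥(Subgroup.closure M) → A) → (↥(Subgroup.closure M) → A))
    (hτH : ∀ (c : ↥(Subgroup.closure M) → A) (h : ↥(Subgroup.closure M)),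
      τH c h = μ (fun m : M => c (h * ⟨m.1, Subgroup.subset_closure m.2⟩))) :
    Function.Surjective τ ↔ Function.Surjective τH := by
  classical
  constructor
  · intro hs d
    set e : G → A := fun g => if hg : g ∈ Subgroup.closure M then d ⟨g, hg⟩ else d 1 with he
    obtain ⟨c, hc⟩ := hs e
    refine ⟨fun h => c h.1, funext fun h => ?_⟩
    have h2 : τ c h.1 = e h.1 := congrFun hc _
    rw [hτ] at h2
    have h3 : e h.1 = d h := by simp [he, dif_pos h.2]
    rw [h3] at h2
    rw [hτH]
    exact h2
  · intro hs e
    have key : ∀ q : G ⧸ Subgroup.closure M,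
        ∃ c, τH c = fun h : ↥(Subgroup.closure M) => e (Quotient.out q * (h : G)) := fun q => hs _
    choose c hc using key
    have hmem : ∀ g : G,
        (Quotient.out (QuotientGroup.mk (s := Subgroup.closure M) g))⁻¹ * g ∈ Subgroup.closure M := by
      intro g
      have h1 : (QuotientGroup.mk (Quotient.out (QuotientGroup.mk (s := Subgroup.closure M) g)) :
          G ⧸ Subgroup.closure M) = QuotientGroup.mk g := by
        exact Quotient.out_eq' _
      exact (QuotientGroup.eq ).mp h1
    refine ⟨fun g => c (QuotientGroup.mk g) ⟨_, hmem g⟩, funext fun g => ?_⟩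
    rw [hτ]
    have hq : ∀ m : M, (QuotientGroup.mk (s := Subgroup.closure M) (g * m)) =
        QuotientGroup.mk g := fun m =>
      QuotientGroup.mk_mul_of_mem g (Subgroup.subset_closure m.2)
    have step : (fun m : M => c (QuotientGroup.mk (g * m)) ⟨_, hmem (g * m)⟩) =
        fun m : M => c (QuotientGroup.mk g)
          (⟨_, hmem g⟩ * ⟨m.1, Subgroup.subset_closure m.2⟩) := by
      funext m
      have := hq m
      congr 1 <;> try rw [this]
      · apply Subtype.ext
        simp [this, mul_assoc]
    rw [step, ← hτH, hc]
    simp
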